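/- Any separable density matrix $\rho = \sum_i p_i |u_i\rangle\langle u_i|\otimes|v_i\rangle\langle v_i|$ on $\mathbb{C}^2\otimes\mathbb{C}^d$ ($d\geq 2$) satisfies $\langle 2I_2\otimes I_d + (2-d)I_2\otimes B_1 + 2I_2\otimes B_2 + \cdots + 2I_2\otimes B_{d-1} + dA_3\otimes B_1\rangle_\rho \geq \big(\langle dI_2\otimes B_1 + 2A_3\otimes I_d + (2-d)A_3\otimes B_1 + 2A_3\otimes B_2 + \cdots + 2A_3\otimes B_{d-1}\rangle_\rho^2 + d^2\langle A_1\otimes B_d + A_2\otimes B_{d+1}\rangle_\rho^2\big)^{1/2}$ for all $A_i = U\sigma_iU^\dagger$ and $B_j = V\lambda_jV^\dagger$ with $U$ a $2\times 2$ unitary and $V$ a $d\times d$ unitary. -/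

import Mathlib

open Matrix Kronecker
open scoped ComplexOrder

noncomputable section

abbrev M2 : Type := Matrix (Fin 2) (Fin 2) ℂ

def sig1 : M2 := Matrix.single 0 1 1 + Matrix.single 1 0 1
def sig2 : M2 := Complex.I • Matrix.single 0 1 1 - Complex.I • Matrix.single 1 0 1
def sig3 : M2 := Matrix.single 0 0 1 - Matrix.single 1 1 1

/-- partial transpose on the first (2-dimensional) factor -/
def PT {d : ℕ} (ρ : Matrix (Fin 2 × Fin d) (Fin 2 × Fin d) ℂ) :
    Matrix (Fin 2 × Fin d) (Fin 2 × Fin d) ℂ :=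
  fun p q => ρ (q.1, p.2) (p.1, q.2)

def expval {n : Type} [Fintype n] (ρ M : Matrix n n ℂ) : ℝ := ((ρ * M).trace).re

def proj {n : Type} (ψ : n → ℂ) : Matrix n n ℂ := Matrix.vecMulVec ψ (star ψ)

/-- λ_k = |0⟩⟨0| - |k⟩⟨k| for 1 ≤ k ≤ d-1 -/
def lamK (d : ℕ) (hd : 2 ≤ d) (k : Fin d) : Matrix (Fin d) (Fin d) ℂ :=
  Matrix.single ⟨0, by omega⟩ ⟨0, by omega⟩ 1 - Matrix.single k k 1

/-- λ_d = |0⟩⟨1| + |1⟩⟨0| -/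
def lamD (d : ℕ) (hd : 2 ≤ d) : Matrix (Fin d) (Fin d) ℂ :=
  Matrix.single ⟨0, by omega⟩ ⟨1, by omega⟩ 1 + Matrix.single ⟨1, by omega⟩ ⟨0, by omega⟩ 1

/-- λ_{d+1} = i|0⟩⟨1| - i|1⟩⟨0| -/
def lamD1 (d : ℕ) (hd : 2 ≤ d) : Matrix (Fin d) (Fin d) ℂ :=
  Complex.I • Matrix.single ⟨0, by omega⟩ ⟨1, by omega⟩ 1
    - Complex.I • Matrix.single ⟨1, by omega⟩ ⟨0, by omega⟩ 1

/-- A_i = U σ_i U† -/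
def dA (U : M2) (i : Fin 3) : M2 := U * (![sig1, sig2, sig3] i) * Uᴴ

/-- 2 I⊗I + (2-d) I⊗B₁ + Σ_{k=2}^{d-1} 2 I⊗B_k + d A₃⊗B₁ -/
def DObs0 (d : ℕ) (hd : 2 ≤ d) (U : M2) (V : Matrix (Fin d) (Fin d) ℂ) :
    Matrix (Fin 2 × Fin d) (Fin 2 × Fin d) ℂ :=
  (2:ℂ) • ((1:M2) ⊗ₖ (1 : Matrix (Fin d) (Fin d) ℂ))
    + ((2:ℂ) - (d:ℂ)) • ((1:M2) ⊗ₖ (V * lamK d hd ⟨1, by omega⟩ * Vᴴ))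
    + (∑ k ∈ Finset.univ.filter (fun k : Fin d => 2 ≤ (k : ℕ)),
        (2:ℂ) • ((1:M2) ⊗ₖ (V * lamK d hd k * Vᴴ)))
    + (d:ℂ) • (dA U 2 ⊗ₖ (V * lamK d hd ⟨1, by omega⟩ * Vᴴ))

/-- d I⊗B₁ + 2 A₃⊗I + (2-d) A₃⊗B₁ + Σ_{k=2}^{d-1} 2 A₃⊗B_k -/
def DObs1 (d : ℕ) (hd : 2 ≤ d) (U : M2) (V : Matrix (Fin d) (Fin d) ℂ) :
    Matrix (Fin 2 × Fin d) (Fin 2 × Fin d) ℂ :=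
  (d:ℂ) • ((1:M2) ⊗ₖ (V * lamK d hd ⟨1, by omega⟩ * Vᴴ))
    + (2:ℂ) • (dA U 2 ⊗ₖ (1 : Matrix (Fin d) (Fin d) ℂ))
    + ((2:ℂ) - (d:ℂ)) • (dA U 2 ⊗ₖ (V * lamK d hd ⟨1, by omega⟩ * Vᴴ))
    + (∑ k ∈ Finset.univ.filter (fun k : Fin d => 2 ≤ (k : ℕ)),
        (2:ℂ) • (dA U 2 ⊗ₖ (V * lamK d hd k * Vᴴ)))

/-- A₁⊗B_d + A₂⊗B_{d+1} -/
def DObs2 (d : ℕ) (hd : 2 ≤ d) (U : M2) (V : Matrix (Fin d) (Fin d) ℂ) :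
    Matrix (Fin 2 × Fin d) (Fin 2 × Fin d) ℂ :=
  dA U 0 ⊗ₖ (V * lamD d hd * Vᴴ) + dA U 1 ⊗ₖ (V * lamD1 d hd * Vᴴ)


section Aux

open Complex

lemma trace_proj_mul' {n : Type} [Fintype n] [DecidableEq n] (u : n → ℂ) (M : Matrix n n ℂ) :
    (proj u * M).trace = star u ⬝ᵥ M *ᵥ u := by
  simp only [Matrix.trace, Matrix.diag, proj, Matrix.mul_apply, Matrix.vecMulVec_apply,
    dotProduct, Matrix.mulVec, Pi.star_apply]
  rw [Finset.sum_comm]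
  congr 1; ext k
  rw [Finset.mul_sum]
  congr 1; ext j
  ring

lemma qf_conj' {n : Type} [Fintype n] [DecidableEq n] (U H : Matrix n n ℂ) (u : n → ℂ) :
    star u ⬝ᵥ (U * H * Uᴴ) *ᵥ u = star (Uᴴ *ᵥ u) ⬝ᵥ H *ᵥ (Uᴴ *ᵥ u) := by
  rw [Matrix.star_mulVec, ← Matrix.mulVec_mulVec, ← Matrix.mulVec_mulVec,
    Matrix.dotProduct_mulVec, conjTranspose_conjTranspose]

lemma tr_proj_conj' {n : Type} [Fintype n] [DecidableEq n] (u : n → ℂ) (Uu H : Matrix n n ℂ) :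
    (proj u * (Uu * H * Uuᴴ)).trace = star (Uuᴴ *ᵥ u) ⬝ᵥ H *ᵥ (Uuᴴ *ᵥ u) := by
  rw [trace_proj_mul', qf_conj']

lemma qf_std' {n : Type} [Fintype n] [DecidableEq n] (a b : n) (w : n → ℂ) :
    star w ⬝ᵥ (Matrix.single a b (1:ℂ)) *ᵥ w = (starRingEnd ℂ) (w a) * w b := by
  simp [dotProduct, Matrix.mulVec, Matrix.single, Finset.sum_ite_eq, ite_and]

lemma qf_diag' {n : Type} [Fintype n] [DecidableEq n] (a b : n) (w : n → ℂ) :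
    star w ⬝ᵥ (Matrix.single a a 1 - Matrix.single b b 1) *ᵥ w
      = ((Complex.normSq (w a) - Complex.normSq (w b) : ℝ) : ℂ) := by
  simp only [Matrix.sub_mulVec, dotProduct_sub, qf_std']
  push_cast
  rw [Complex.normSq_eq_conj_mul_self, Complex.normSq_eq_conj_mul_self]

lemma qf_sym' {n : Type} [Fintype n] [DecidableEq n] (a b : n) (w : n → ℂ) :
    star w ⬝ᵥ (Matrix.single a b 1 + Matrix.single b a 1) *ᵥ w
      = ((2 * ((starRingEnd ℂ) (w a) * w b).re : ℝ) : ℂ) := by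
  simp only [Matrix.add_mulVec, dotProduct_add, qf_std']
  rw [show (starRingEnd ℂ) (w b) * w a
      = (starRingEnd ℂ) ((starRingEnd ℂ) (w a) * w b) by simp [mul_comm]]
  rw [Complex.add_conj]

lemma qf_asym' {n : Type} [Fintype n] [DecidableEq n] (a b : n) (w : n → ℂ) :
    star w ⬝ᵥ (Complex.I • Matrix.single a b 1
        - Complex.I • Matrix.single b a 1) *ᵥ w
      = ((-2 * ((starRingEnd ℂ) (w a) * w b).im : ℝ) : ℂ) := by
  simp only [Matrix.sub_mulVec, dotProduct_sub, Matrix.smul_mulVec,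
    dotProduct_smul, qf_std', smul_eq_mul]
  rw [show (starRingEnd ℂ) (w b) * w a
      = (starRingEnd ℂ) ((starRingEnd ℂ) (w a) * w b) by simp [mul_comm]]
  set z := (starRingEnd ℂ) (w a) * w b
  rw [← mul_sub, Complex.sub_conj]
  push_cast
  rw [show Complex.I * (2 * z.im * Complex.I) = 2*z.im*(Complex.I*Complex.I) by ring,
    Complex.I_mul_I]
  ring

lemma key_real (D p q x y a b c e r : ℝ) (hD : 0 ≤ D)
    (hp : 0 ≤ p) (hq : 0 ≤ q) (hx : 0 ≤ x) (hy : 0 ≤ y) (hr : 0 ≤ r)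
    (hpq : p + q = 1) (hxyr : x + y + r = 1)
    (hzeta : a^2 + b^2 = p*q) (hz : c^2 + e^2 = x*y) :
    Real.sqrt ((D*(x-y) + 2*(p-q) + (2-D)*((p-q)*(x-y)) + (p-q)*(2*((D-2)*x - r)))^2
        + D^2 * (2*a*(2*c) + (-2*b)*(-2*e))^2)
      ≤ 2 + (2-D)*(x-y) + 2*((D-2)*x - r) + D*((p-q)*(x-y)) := by
  have hr' : r = 1 - x - y := by linarith
  have hq' : q = 1 - p := by linarith
  subst hr' hq'
  have hF : (2:ℝ) + (2-D)*(x-y) + 2*((D-2)*x - (1-x-y)) + D*((p-(1-p))*(x-y))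
      = 2*D*(p*x + (1-p)*y) := by ring
  have hG : D*(x-y) + 2*(p-(1-p)) + (2-D)*((p-(1-p))*(x-y)) + (p-(1-p))*(2*((D-2)*x - (1-x-y)))
      = 2*D*(p*x - (1-p)*y) := by ring
  rw [hF, hG]
  have hF0 : 0 ≤ 2*D*(p*x + (1-p)*y) := by positivity
  rw [show (2*a*(2*c) + (-2*b)*(-2*e)) = 4*(a*c+b*e) by ring]
  have hkey : (2*D*(p*x + (1-p)*y))^2 - (2*D*(p*x - (1-p)*y))^2 - D^2*(4*(a*c+b*e))^2
      = 16*D^2*(a*e-b*c)^2 := by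
    linear_combination (-16*D^2*x*y) * hzeta + (-16*D^2*(a^2+b^2)) * hz
  have hpos : (0:ℝ) ≤ 16*D^2*(a*e-b*c)^2 := by positivity
  have hle : (2*D*(p*x - (1-p)*y))^2 + D^2 * (4*(a*c+b*e))^2 ≤ (2*D*(p*x + (1-p)*y))^2 := by
    linarith
  calc Real.sqrt ((2*D*(p*x - (1-p)*y))^2 + D^2 * (4*(a*c+b*e))^2)
      ≤ Real.sqrt ((2*D*(p*x + (1-p)*y))^2) := Real.sqrt_le_sqrt hle
    _ = 2*D*(p*x + (1-p)*y) := Real.sqrt_sq hF0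

lemma perstate (d : ℕ) (hd : 2 ≤ d)
    (U : M2) (hU : U ∈ Matrix.unitaryGroup (Fin 2) ℂ)
    (V : Matrix (Fin d) (Fin d) ℂ) (hV : V ∈ Matrix.unitaryGroup (Fin d) ℂ)
    (u : Fin 2 → ℂ) (v : Fin d → ℂ)
    (hu : star u ⬝ᵥ u = 1) (hv : star v ⬝ᵥ v = 1) :
    Real.sqrt ((expval (proj u ⊗ₖ proj v) (DObs1 d hd U V))^2
        + (d:ℝ)^2 * (expval (proj u ⊗ₖ proj v) (DObs2 d hd U V))^2)
      ≤ expval (proj u ⊗ₖ proj v) (DObs0 d hd U V) := by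
  have hz0 : (0:ℕ) < d := by omega
  have hz1 : (1:ℕ) < d := by omega
  set w : Fin 2 → ℂ := Uᴴ *ᵥ u with hwdef
  set cc : Fin d → ℂ := Vᴴ *ᵥ v with hccdef
  set z0 : Fin d := ⟨0, hz0⟩ with hz0def
  set z1 : Fin d := ⟨1, hz1⟩ with hz1def
  set S : Finset (Fin d) := Finset.univ.filter (fun k : Fin d => 2 ≤ (k : ℕ)) with hSdef
  set p : ℝ := Complex.normSq (w 0) with hpdef
  set q : ℝ := Complex.normSq (w 1) with hqdef
  set aa : ℝ := ((starRingEnd ℂ) (w 0) * w 1).re with haadef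
  set bb : ℝ := ((starRingEnd ℂ) (w 0) * w 1).im with hbbdef
  set x : ℝ := Complex.normSq (cc z0) with hxdef
  set y : ℝ := Complex.normSq (cc z1) with hydef
  set c : ℝ := ((starRingEnd ℂ) (cc z0) * cc z1).re with hcdef
  set e : ℝ := ((starRingEnd ℂ) (cc z0) * cc z1).im with hedef
  set r : ℝ := ∑ k ∈ S, Complex.normSq (cc k) with hrdef
  -- unit norms of rotated vectors
  have hUU : U * Uᴴ = 1 := by
    have := (Matrix.mem_unitaryGroup_iff).mp hU
    simpa [Matrix.star_eq_conjTranspose] using this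
  have hVV : V * Vᴴ = 1 := by
    have := (Matrix.mem_unitaryGroup_iff).mp hV
    simpa [Matrix.star_eq_conjTranspose] using this
  have hw1 : star w ⬝ᵥ w = 1 := by
    have h := qf_conj' U 1 u
    rw [mul_one, hUU] at h
    rw [Matrix.one_mulVec, Matrix.one_mulVec, hu] at h
    exact h.symm
  have hcc1 : star cc ⬝ᵥ cc = 1 := by
    have h := qf_conj' V 1 v
    rw [mul_one, hVV] at h
    simpa [hv] using h.symm
  have hpq : p + q = 1 := by
    have h : ((p + q : ℝ) : ℂ) = 1 := by
      rw [← hw1]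
      simp only [dotProduct, Pi.star_apply, Fin.sum_univ_two, Complex.star_def]
      push_cast
      rw [Complex.normSq_eq_conj_mul_self, Complex.normSq_eq_conj_mul_self]
    exact_mod_cast h
  have hxyr : x + y + r = 1 := by
    have h : ((∑ k, Complex.normSq (cc k) : ℝ) : ℂ) = 1 := by
      rw [← hcc1]
      simp only [dotProduct, Pi.star_apply, Complex.star_def]
      push_cast
      refine Finset.sum_congr rfl fun k _ => ?_
      rw [Complex.normSq_eq_conj_mul_self]
    have hsum : ∑ k, Complex.normSq (cc k) = 1 := by exact_mod_cast h
    have hne : z0 ≠ z1 := by simp [hz0def, hz1def, Fin.ext_iff]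
    have hlow : Finset.univ.filter (fun k : Fin d => ¬ 2 ≤ (k : ℕ)) = {z0, z1} := by
      ext k
      simp only [Finset.mem_filter, Finset.mem_univ, true_and, Finset.mem_insert,
        Finset.mem_singleton, hz0def, hz1def, Fin.ext_iff]
      omega
    have hsplit : ∑ k, Complex.normSq (cc k)
        = (∑ k ∈ S, Complex.normSq (cc k))
          + ∑ k ∈ Finset.univ.filter (fun k : Fin d => ¬ 2 ≤ (k : ℕ)), Complex.normSq (cc k) :=
      (Finset.sum_filter_add_sum_filter_not Finset.univ _ _).symm
    rw [hlow, Finset.sum_pair hne] at hsplit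
    rw [hsplit] at hsum
    rw [hxdef, hydef, hrdef]
    linarith
  have hcardS : (S.card : ℝ) = (d : ℝ) - 2 := by
    have hne : z0 ≠ z1 := by simp [hz0def, hz1def, Fin.ext_iff]
    have hlow : Finset.univ.filter (fun k : Fin d => ¬ 2 ≤ (k : ℕ)) = {z0, z1} := by
      ext k
      simp only [Finset.mem_filter, Finset.mem_univ, true_and, Finset.mem_insert,
        Finset.mem_singleton, hz0def, hz1def, Fin.ext_iff]
      omega
    have hSdiff : S = Finset.univ \ {z0, z1} := by
      ext k
      simp only [hSdef, Finset.mem_filter, Finset.mem_univ, true_and, Finset.mem_sdiff,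
        Finset.mem_insert, Finset.mem_singleton, hz0def, hz1def, Fin.ext_iff]
      omega
    have hsub : ({z0, z1} : Finset (Fin d)) ⊆ Finset.univ := Finset.subset_univ _
    have : S.card = d - 2 := by
      rw [hSdiff, Finset.card_sdiff_of_subset hsub, Finset.card_pair hne, Finset.card_univ,
        Fintype.card_fin]
    rw [this]
    push_cast [Nat.cast_sub hd]
    ring
  -- trace lemmas
  have htI2 : (proj u * (1:M2)).trace = 1 := by
    rw [trace_proj_mul']; simpa using hu
  have htId : (proj v * (1:Matrix (Fin d) (Fin d) ℂ)).trace = 1 := by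
    rw [trace_proj_mul']; simpa using hv
  have htA1 : (proj u * dA U 0).trace = ((2*aa : ℝ) : ℂ) := by
    rw [show dA U 0 = U * sig1 * Uᴴ from rfl, tr_proj_conj', sig1, qf_sym']
  have htA2 : (proj u * dA U 1).trace = ((-2*bb : ℝ) : ℂ) := by
    rw [show dA U 1 = U * sig2 * Uᴴ from rfl, tr_proj_conj', sig2, qf_asym']
  have htA3 : (proj u * dA U 2).trace = ((p - q : ℝ) : ℂ) := by
    rw [show dA U 2 = U * sig3 * Uᴴ from rfl, tr_proj_conj', sig3, qf_diag']
  have htBk : ∀ k : Fin d, (proj v * (V * lamK d hd k * Vᴴ)).trace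
      = ((x - Complex.normSq (cc k) : ℝ) : ℂ) := by
    intro k
    rw [tr_proj_conj', lamK, qf_diag']
  have htBd : (proj v * (V * lamD d hd * Vᴴ)).trace = ((2*c : ℝ) : ℂ) := by
    rw [tr_proj_conj', lamD, qf_sym']
  have htBd1 : (proj v * (V * lamD1 d hd * Vᴴ)).trace = ((-2*e : ℝ) : ℂ) := by
    rw [tr_proj_conj', lamD1, qf_asym']
  have htB1 : (proj v * (V * lamK d hd ⟨1, by omega⟩ * Vᴴ)).trace = ((x - y : ℝ) : ℂ) :=
    htBk ⟨1, by omega⟩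
  -- the three expectation values
  have hE0 : expval (proj u ⊗ₖ proj v) (DObs0 d hd U V)
      = 2 + (2-(d:ℝ))*(x-y) + 2*(((d:ℝ)-2)*x - r) + (d:ℝ)*((p-q)*(x-y)) := by
    rw [expval]
    rw [show ((proj u ⊗ₖ proj v) * DObs0 d hd U V).trace
        = ((2 + (2-(d:ℝ))*(x-y) + 2*(((d:ℝ)-2)*x - r) + (d:ℝ)*((p-q)*(x-y)) : ℝ) : ℂ) from ?_]
    · exact Complex.ofReal_re _
    simp only [DObs0, Matrix.mul_add, Matrix.trace_add, Matrix.mul_smul, Matrix.trace_smul,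
      Matrix.mul_sum, Matrix.trace_sum, ← Matrix.mul_kronecker_mul, Matrix.trace_kronecker,
      smul_eq_mul]
    simp only [htI2, htId, htA3, htB1]
    rw [show ∑ k ∈ S, (2:ℂ) * (1 * (proj v * (V * lamK d hd k * Vᴴ)).trace)
        = ((2*(((d:ℝ)-2)*x - r) : ℝ) : ℂ) from ?_]
    · push_cast
      ring
    · have : ∀ k ∈ S, (2:ℂ) * (1 * (proj v * (V * lamK d hd k * Vᴴ)).trace)
          = ((2 * (x - Complex.normSq (cc k)) : ℝ) : ℂ) := by
        intro k _
        rw [htBk k]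
        push_cast
        ring
      rw [Finset.sum_congr rfl this, ← Complex.ofReal_sum]
      congr 1
      rw [← Finset.mul_sum, Finset.sum_sub_distrib, Finset.sum_const, nsmul_eq_mul, hrdef,
        hcardS]
  have hE1 : expval (proj u ⊗ₖ proj v) (DObs1 d hd U V)
      = (d:ℝ)*(x-y) + 2*(p-q) + (2-(d:ℝ))*((p-q)*(x-y)) + (p-q)*(2*(((d:ℝ)-2)*x - r)) := by
    rw [expval]
    rw [show ((proj u ⊗ₖ proj v) * DObs1 d hd U V).trace
        = (((d:ℝ)*(x-y) + 2*(p-q) + (2-(d:ℝ))*((p-q)*(x-y)) + (p-q)*(2*(((d:ℝ)-2)*x - r)) : ℝ) : ℂ) from ?_]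
    · exact Complex.ofReal_re _
    simp only [DObs1, Matrix.mul_add, Matrix.trace_add, Matrix.mul_smul, Matrix.trace_smul,
      Matrix.mul_sum, Matrix.trace_sum, ← Matrix.mul_kronecker_mul, Matrix.trace_kronecker,
      smul_eq_mul]
    simp only [htI2, htId, htA3, htB1]
    rw [show ∑ k ∈ S, (2:ℂ) * (((p - q : ℝ) : ℂ) * (proj v * (V * lamK d hd k * Vᴴ)).trace)
        = (((p-q)*(2*(((d:ℝ)-2)*x - r)) : ℝ) : ℂ) from ?_]
    · push_cast
      ring
    · have : ∀ k ∈ S, (2:ℂ) * (((p - q : ℝ) : ℂ) * (proj v * (V * lamK d hd k * Vᴴ)).trace)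
          = (((p-q) * (2 * (x - Complex.normSq (cc k))) : ℝ) : ℂ) := by
        intro k _
        rw [htBk k]
        push_cast
        ring
      rw [Finset.sum_congr rfl this, ← Complex.ofReal_sum]
      congr 1
      rw [← Finset.mul_sum, ← Finset.mul_sum, Finset.sum_sub_distrib, Finset.sum_const,
        nsmul_eq_mul, hrdef, hcardS]
  have hE2 : expval (proj u ⊗ₖ proj v) (DObs2 d hd U V)
      = 2*aa*(2*c) + (-2*bb)*(-2*e) := by
    rw [expval]
    rw [show ((proj u ⊗ₖ proj v) * DObs2 d hd U V).trace
        = ((2*aa*(2*c) + (-2*bb)*(-2*e) : ℝ) : ℂ) from ?_]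
    · exact Complex.ofReal_re _
    simp only [DObs2, Matrix.mul_add, Matrix.trace_add,
      ← Matrix.mul_kronecker_mul, Matrix.trace_kronecker]
    rw [htA1, htA2, htBd, htBd1]
    push_cast
    ring
  rw [hE0, hE1, hE2]
  have hzeta : aa^2 + bb^2 = p*q := by
    have h1 : aa^2 + bb^2 = Complex.normSq ((starRingEnd ℂ) (w 0) * w 1) := by
      rw [Complex.normSq_apply, haadef, hbbdef]; ring
    rw [h1, Complex.normSq_mul, Complex.normSq_conj, hpdef, hqdef]
  have hzc : c^2 + e^2 = x*y := by
    have h1 : c^2 + e^2 = Complex.normSq ((starRingEnd ℂ) (cc z0) * cc z1) := by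
      rw [Complex.normSq_apply, hcdef, hedef]; ring
    rw [h1, Complex.normSq_mul, Complex.normSq_conj, hxdef, hydef]
  have hr0 : 0 ≤ r := by
    rw [hrdef]
    exact Finset.sum_nonneg fun k _ => Complex.normSq_nonneg _
  exact key_real (d:ℝ) p q x y aa bb c e r (by positivity)
    (Complex.normSq_nonneg _) (Complex.normSq_nonneg _)
    (Complex.normSq_nonneg _) (Complex.normSq_nonneg _) hr0 hpq hxyr hzeta hzc

end Aux

theorem stmt_16 (d : ℕ) (hd : 2 ≤ d)
    (ρ : Matrix (Fin 2 × Fin d) (Fin 2 × Fin d) ℂ)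
    (n : ℕ) (p : Fin n → ℝ) (u : Fin n → (Fin 2 → ℂ)) (v : Fin n → (Fin d → ℂ))
    (hp0 : ∀ i, 0 ≤ p i) (hp1 : ∑ i, p i = 1)
    (hu : ∀ i, star (u i) ⬝ᵥ u i = 1) (hv : ∀ i, star (v i) ⬝ᵥ v i = 1)
    (hρ : ρ = ∑ i, ((p i : ℝ) : ℂ) • (proj (u i) ⊗ₖ proj (v i)))
    (U : M2) (hU : U ∈ Matrix.unitaryGroup (Fin 2) ℂ)
    (V : Matrix (Fin d) (Fin d) ℂ) (hV : V ∈ Matrix.unitaryGroup (Fin d) ℂ) :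
    Real.sqrt ((expval ρ (DObs1 d hd U V))^2 + (d:ℝ)^2 * (expval ρ (DObs2 d hd U V))^2)
      ≤ expval ρ (DObs0 d hd U V) := by
  subst hρ
  have hlin : ∀ M : Matrix (Fin 2 × Fin d) (Fin 2 × Fin d) ℂ,
      expval (∑ i, ((p i : ℝ) : ℂ) • (proj (u i) ⊗ₖ proj (v i))) M
        = ∑ i, p i * expval (proj (u i) ⊗ₖ proj (v i)) M := by
    intro M
    simp only [expval, Matrix.sum_mul, Matrix.smul_mul, Matrix.trace_sum, Matrix.trace_smul,
      smul_eq_mul, Complex.re_sum, Complex.re_ofReal_mul]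
  rw [hlin, hlin, hlin]
  set G : Fin n → ℝ := fun i => expval (proj (u i) ⊗ₖ proj (v i)) (DObs1 d hd U V) with hG
  set H : Fin n → ℝ := fun i => expval (proj (u i) ⊗ₖ proj (v i)) (DObs2 d hd U V) with hH
  set F : Fin n → ℝ := fun i => expval (proj (u i) ⊗ₖ proj (v i)) (DObs0 d hd U V) with hF
  have hper : ∀ i, Real.sqrt (G i ^ 2 + (d:ℝ)^2 * H i ^ 2) ≤ F i := fun i =>
    perstate d hd U hU V hV (u i) (v i) (hu i) (hv i)
  have habs : ∀ g h : ℝ, Real.sqrt (g^2 + (d:ℝ)^2 * h^2)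
      = ‖(g : ℂ) + (((d:ℝ) * h : ℝ) : ℂ) * Complex.I‖ := by
    intro g h
    rw [Complex.norm_add_mul_I]
    congr 1
    ring
  rw [habs]
  have hcomb : ((∑ i, p i * G i : ℝ) : ℂ) + (((d:ℝ) * ∑ i, p i * H i : ℝ) : ℂ) * Complex.I
      = ∑ i, ((p i : ℝ) : ℂ) * (((G i : ℝ) : ℂ) + (((d:ℝ) * H i : ℝ) : ℂ) * Complex.I) := by
    push_cast
    rw [Finset.mul_sum, Finset.sum_mul, ← Finset.sum_add_distrib]
    exact Finset.sum_congr rfl fun i _ => by ring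
  rw [hcomb]
  calc ‖∑ i, ((p i : ℝ) : ℂ) * (((G i : ℝ) : ℂ) + (((d:ℝ) * H i : ℝ) : ℂ) * Complex.I)‖
      ≤ ∑ i, ‖((p i : ℝ) : ℂ) * (((G i : ℝ) : ℂ) + (((d:ℝ) * H i : ℝ) : ℂ) * Complex.I)‖ :=
        norm_sum_le _ _
    _ = ∑ i, p i * Real.sqrt (G i ^ 2 + (d:ℝ)^2 * H i ^ 2) := by
        refine Finset.sum_congr rfl fun i _ => ?_
        rw [norm_mul, Complex.norm_real, Real.norm_eq_abs, abs_of_nonneg (hp0 i), habs]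
    _ ≤ ∑ i, p i * F i := by
        refine Finset.sum_le_sum fun i _ => ?_
        exact mul_le_mul_of_nonneg_left (hper i) (hp0 i)
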